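/- Let f_i : (B_i, C_i) → (X_i, A_i), i = 1,2, be maps of CW pairs with B₁ × B₂ normal. Then srelcat(f₁ × f₂) ≤ srelcat(f₁) + srelcat(f₂) for the product map (B₁ × B₂, C₁ × C₂) → (X₁ × X₂, A₁ × A₂). In particular, srelcat(B × X, C × A) ≤ srelcat(B,C) + srelcat(X,A). -/

import Mathlib

open Set unitInterval

section Defs

variable {X : Type*} {Y : Type*} [TopologicalSpace X] [TopologicalSpace Y]

/-- The restriction of `f` to `V` is null-homotopic. -/
def NullhomotopicOn (f : X → Y) (V : Set X) : Prop :=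
  ∃ (H : C(unitInterval × ↥V, Y)) (y : Y),
    (∀ x : ↥V, H (1, x) = f x) ∧ (∀ x : ↥V, H (0, x) = y)

/-- The restriction of `f` to `V` is homotopic to a map with values in `A`. -/
def DeformsIntoOn (f : X → Y) (V : Set X) (A : Set Y) : Prop :=
  ∃ H : C(unitInterval × ↥V, Y),
    (∀ x : ↥V, H (1, x) = f x) ∧ (∀ x : ↥V, H (0, x) ∈ A)

/-- There is a homotopy of pairs `(V × I, (V ∩ A) × I) → (Y, B)` ending at `f|_V`
and starting at a map into `B`. -/
def RelPairDeform (f : X → Y) (V A : Set X) (B : Set Y) : Prop :=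
  ∃ H : C(unitInterval × ↥V, Y),
    (∀ x : ↥V, H (1, x) = f x) ∧ (∀ x : ↥V, H (0, x) ∈ B) ∧
    (∀ (t : unitInterval) (x : ↥V), (x : X) ∈ A → H (t, x) ∈ B)

/-- `relcat f A B ≤ n` : covering by `n+1` open sets as in the definition of the
relative category of a map of pairs `f : (X,A) → (Y,B)`. -/
def relcatLE (f : X → Y) (A : Set X) (B : Set Y) (n : ℕ) : Prop :=
  ∃ V : Fin (n + 1) → Set X, (∀ i, IsOpen (V i)) ∧ (⋃ i, V i) = Set.univ ∧
    A ⊆ V 0 ∧ (∀ i, i ≠ 0 → NullhomotopicOn f (V i)) ∧ RelPairDeform f (V 0) A B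

/-- The relative category of a map of pairs `f : (X,A) → (Y,B)` (`⊤` if none exists). -/
noncomputable def relcat (f : X → Y) (A : Set X) (B : Set Y) : ℕ∞ :=
  sInf {n : ℕ∞ | ∃ m : ℕ, n = (m : ℕ∞) ∧ relcatLE f A B m}

/-- `qscat f A ≤ n` : covering by `n+1` open sets on each of which `f` deforms into `A`. -/
def qscatLE (f : X → Y) (A : Set Y) (n : ℕ) : Prop :=
  ∃ V : Fin (n + 1) → Set X, (∀ i, IsOpen (V i)) ∧ (⋃ i, V i) = Set.univ ∧
    ∀ i, DeformsIntoOn f (V i) A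

/-- The quasi-strong LS category of a map of pairs `f : (B,C) → (X,A)`. -/
noncomputable def qscat (f : X → Y) (A : Set Y) : ℕ∞ :=
  sInf {n : ℕ∞ | ∃ m : ℕ, n = (m : ℕ∞) ∧ qscatLE f A m}

/-- The restriction of `f : (X,C) → (Y,A)` to `(V, V ∩ C)` is strongly relatively
inessential. -/
def StronglyRelInessentialOn (f : X → Y) (V C : Set X) (A : Set Y) : Prop :=
  ∃ H : C(unitInterval × ↥V, Y),
    (∀ x : ↥V, H (1, x) = f x) ∧ (∀ x : ↥V, H (0, x) ∈ A) ∧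
    (∀ (t : unitInterval) (x : ↥V), (x : X) ∈ C → H (t, x) = f x)

/-- `srelcat f C A ≤ n`. -/
def srelcatLE (f : X → Y) (C : Set X) (A : Set Y) (n : ℕ) : Prop :=
  ∃ V : Fin (n + 1) → Set X, (∀ i, IsOpen (V i)) ∧ (⋃ i, V i) = Set.univ ∧
    ∀ i, StronglyRelInessentialOn f (V i) C A

/-- The strong relative LS category of a map of pairs `f : (B,C) → (X,A)`. -/
noncomputable def srelcat (f : X → Y) (C : Set X) (A : Set Y) : ℕ∞ :=
  sInf {n : ℕ∞ | ∃ m : ℕ, n = (m : ℕ∞) ∧ srelcatLE f C A m}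

/-- `catMap f ≤ n` : covering by `n+1` open sets on each of which `f` is null-homotopic. -/
def catMapLE (f : X → Y) (n : ℕ) : Prop :=
  ∃ V : Fin (n + 1) → Set X, (∀ i, IsOpen (V i)) ∧ (⋃ i, V i) = Set.univ ∧
    ∀ i, NullhomotopicOn f (V i)

/-- The LS category of a map. -/
noncomputable def catMap (f : X → Y) : ℕ∞ :=
  sInf {n : ℕ∞ | ∃ m : ℕ, n = (m : ℕ∞) ∧ catMapLE f m}

end Defs

/-- The `n`-th (higher) topological complexity of a map `f : X → Y`:
`qscat` of the induced map of pairs `(Xⁿ, Δₙ(X)) → (Yⁿ, Δₙ(Y))`. -/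
noncomputable def TCmap (n : ℕ) {X Y : Type*} [TopologicalSpace X] [TopologicalSpace Y]
    (f : X → Y) : ℕ∞ :=
  qscat (fun x : Fin n → X => fun i => f (x i)) {y : Fin n → Y | ∀ i j, y i = y j}

lemma StronglyRelInessentialOn.mono' {B X : Type*} [TopologicalSpace B] [TopologicalSpace X]
    {f : B → X} {C : Set B} {A : Set X} {V V' : Set B} (hsub : V' ⊆ V)
    (h : StronglyRelInessentialOn f V C A) : StronglyRelInessentialOn f V' C A := by
  obtain ⟨H, h1, h0, hC⟩ := h
  refine ⟨H.comp ⟨fun z => (z.1, Set.inclusion hsub z.2),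
    continuous_fst.prodMk ((continuous_inclusion hsub).comp continuous_snd)⟩,
    fun x => h1 _, fun x => h0 _, fun t x hx => hC t _ hx⟩

lemma StronglyRelInessentialOn.prod' {B₁ B₂ X₁ X₂ : Type*} [TopologicalSpace B₁]
    [TopologicalSpace B₂] [TopologicalSpace X₁] [TopologicalSpace X₂]
    {f₁ : B₁ → X₁} {f₂ : B₂ → X₂} {U : Set B₁} {V : Set B₂}
    {C₁ : Set B₁} {C₂ : Set B₂} {A₁ : Set X₁} {A₂ : Set X₂}
    (hu : StronglyRelInessentialOn f₁ U C₁ A₁) (hv : StronglyRelInessentialOn f₂ V C₂ A₂) :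
    StronglyRelInessentialOn (Prod.map f₁ f₂) (U ×ˢ V) (C₁ ×ˢ C₂) (A₁ ×ˢ A₂) := by
  obtain ⟨H₁, h11, h10, h1C⟩ := hu
  obtain ⟨H₂, h21, h20, h2C⟩ := hv
  have c0 : Continuous fun z : unitInterval × ↥(U ×ˢ V) => ((z.2 : B₁ × B₂)) :=
    continuous_subtype_val.comp continuous_snd
  refine ⟨⟨fun z => (H₁ (z.1, ⟨(z.2 : B₁ × B₂).1, z.2.2.1⟩),
      H₂ (z.1, ⟨(z.2 : B₁ × B₂).2, z.2.2.2⟩)),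
      (H₁.continuous.comp (continuous_fst.prodMk
        ((continuous_fst.comp c0).subtype_mk _))).prodMk
      (H₂.continuous.comp (continuous_fst.prodMk
        ((continuous_snd.comp c0).subtype_mk _)))⟩,
    fun x => ?_, fun x => ?_, fun t x hx => ?_⟩
  · exact Prod.ext (h11 _) (h21 _)
  · exact ⟨h10 _, h20 _⟩
  · exact Prod.ext (h1C t _ hx.1) (h2C t _ hx.2)

lemma StronglyRelInessentialOn.iUnion_of_disjoint {B X : Type*} [TopologicalSpace B]
    [TopologicalSpace X] {f : B → X} {C : Set B} {A : Set X} {ι : Type*} {W : ι → Set B}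
    (hopen : ∀ q, IsOpen (W q))
    (hdisj : ∀ q q', q ≠ q' → ∀ p, p ∈ W q → p ∈ W q' → False)
    (hin : ∀ q, StronglyRelInessentialOn f (W q) C A) :
    StronglyRelInessentialOn f (⋃ q, W q) C A := by
  classical
  choose H h1 h0 hC using hin
  set Q : Set B := ⋃ q, W q with hQ
  let SS : ι → Set (unitInterval × ↥Q) := fun q => {z | (z.2 : B) ∈ W q}
  have hSSopen : ∀ q, IsOpen (SS q) :=
    fun q => (hopen q).preimage (continuous_subtype_val.comp continuous_snd)
  let φ : ∀ q, C(↥(SS q), X) := fun q =>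
    ⟨fun z => H q (z.1.1, ⟨(z.1.2 : B), z.2⟩), by
      have c0 : Continuous fun z : ↥(SS q) => (z : unitInterval × ↥Q) := continuous_subtype_val
      exact (H q).continuous.comp ((continuous_fst.comp c0).prodMk
        ((continuous_subtype_val.comp (continuous_snd.comp c0)).subtype_mk _))⟩
  have hφ : ∀ (q q') (z : unitInterval × ↥Q) (hz : z ∈ SS q) (hz' : z ∈ SS q'),
      φ q ⟨z, hz⟩ = φ q' ⟨z, hz'⟩ := by
    intro q q' z hz hz'
    by_cases he : q = q'
    · subst he; rfl
    · exact (hdisj q q' he _ hz hz').elim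
  have hSnhds : ∀ z : unitInterval × ↥Q, ∃ q, SS q ∈ nhds z := by
    intro z
    obtain ⟨q, hq⟩ := mem_iUnion.1 z.2.2
    exact ⟨q, (hSSopen q).mem_nhds hq⟩
  refine ⟨ContinuousMap.liftCover SS φ hφ hSnhds, fun x => ?_, fun x => ?_, fun t x hxC => ?_⟩
  · obtain ⟨q, hq⟩ := mem_iUnion.1 x.2
    have e : ContinuousMap.liftCover SS φ hφ hSnhds (1, x) = φ q ⟨(1, x), hq⟩ :=
      ContinuousMap.liftCover_coe ⟨(1, x), hq⟩
    rw [e]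
    exact h1 q ⟨(x : B), hq⟩
  · obtain ⟨q, hq⟩ := mem_iUnion.1 x.2
    have e : ContinuousMap.liftCover SS φ hφ hSnhds (0, x) = φ q ⟨(0, x), hq⟩ :=
      ContinuousMap.liftCover_coe ⟨(0, x), hq⟩
    rw [e]
    exact h0 q ⟨(x : B), hq⟩
  · obtain ⟨q, hq⟩ := mem_iUnion.1 x.2
    have e : ContinuousMap.liftCover SS φ hφ hSnhds (t, x) = φ q ⟨(t, x), hq⟩ :=
      ContinuousMap.liftCover_coe ⟨(t, x), hq⟩
    rw [e]
    exact hC q t ⟨(x : B), hq⟩ hxC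


lemma exists_bump {Z : Type*} [TopologicalSpace Z] {ι : Type*} [Finite ι] [NormalSpace Z]
    {U : ι → Set Z} (ho : ∀ i, IsOpen (U i)) (hc : ⋃ i, U i = univ) :
    ∃ h : ι → C(Z, ℝ), (∀ i p, 0 ≤ h i p) ∧ (∀ i p, h i p ≠ 0 → p ∈ U i) ∧
      ∀ p, ∃ i, 0 < h i p := by
  obtain ⟨v, hvU, hvo, hvc⟩ := exists_iUnion_eq_closure_subset ho (fun x => Set.toFinite _) hc
  have key : ∀ i, ∃ f : C(Z, ℝ), EqOn f 0 (U i)ᶜ ∧ EqOn f 1 (closure (v i)) ∧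
      ∀ x, f x ∈ Icc (0:ℝ) 1 := fun i =>
    exists_continuous_zero_one_of_isClosed (ho i).isClosed_compl isClosed_closure
      (disjoint_compl_left.mono_right (hvc i))
  choose f hf0 hf1 hf01 using key
  refine ⟨f, fun i p => (hf01 i p).1, fun i p hne => ?_, fun p => ?_⟩
  · by_contra hp
    exact hne (hf0 i hp)
  · obtain ⟨i, hi⟩ := iUnion_eq_univ_iff.1 hvU p
    exact ⟨i, by rw [hf1 i (subset_closure hi)]; norm_num⟩

lemma isOpen_iInter_prop {Z : Type*} [TopologicalSpace Z] (c : Prop) {s : Set Z}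
    (hs : IsOpen s) : IsOpen (⋂ (_ : c), s) := by
  by_cases hc : c <;> simp [hc, hs]

lemma pick_aux {α β : Type*} {S S' : Finset α} {T T' : Finset β} (hS : S.Nonempty)
    (hT : T.Nonempty) (hns : ¬(S ⊆ S' ∧ T ⊆ T')) : ∃ i ∈ S, ∃ j ∈ T, i ∉ S' ∨ j ∉ T' := by
  by_cases hss : S ⊆ S'
  · have : ¬ T ⊆ T' := fun h => hns ⟨hss, h⟩
    obtain ⟨j, hjT, hjT'⟩ := Finset.not_subset.1 this
    obtain ⟨i, hi⟩ := hS
    exact ⟨i, hi, j, hjT, Or.inr hjT'⟩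
  · obtain ⟨i, hiS, hiS'⟩ := Finset.not_subset.1 hss
    obtain ⟨j, hj⟩ := hT
    exact ⟨i, hiS, j, hj, Or.inl hiS'⟩

lemma srelcatLE_prod {B₁ B₂ X₁ X₂ : Type*} [TopologicalSpace B₁] [TopologicalSpace B₂]
    [TopologicalSpace X₁] [TopologicalSpace X₂] [NormalSpace (B₁ × B₂)]
    {C₁ : Set B₁} {C₂ : Set B₂} {A₁ : Set X₁} {A₂ : Set X₂}
    {f₁ : B₁ → X₁} {f₂ : B₂ → X₂} {m n : ℕ}
    (h1 : srelcatLE f₁ C₁ A₁ m) (h2 : srelcatLE f₂ C₂ A₂ n) :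
    srelcatLE (Prod.map f₁ f₂) (C₁ ×ˢ C₂) (A₁ ×ˢ A₂) (m + n) := by
  obtain ⟨U, hUo, hUc, hU⟩ := h1
  obtain ⟨V, hVo, hVc, hV⟩ := h2
  -- bump functions on the product
  obtain ⟨h, h0, hsupp, hcov⟩ := exists_bump (U := fun i => (Prod.fst ⁻¹' U i : Set (B₁ × B₂)))
    (fun i => (hUo i).preimage continuous_fst)
    (by rw [iUnion_eq_univ_iff]; intro p
        obtain ⟨i, hi⟩ := iUnion_eq_univ_iff.1 hUc p.1; exact ⟨i, hi⟩)
  obtain ⟨g, g0, gsupp, gcov⟩ := exists_bump (U := fun j => (Prod.snd ⁻¹' V j : Set (B₁ × B₂)))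
    (fun j => (hVo j).preimage continuous_snd)
    (by rw [iUnion_eq_univ_iff]; intro p
        obtain ⟨j, hj⟩ := iUnion_eq_univ_iff.1 hVc p.2; exact ⟨j, hj⟩)
  -- the basic open sets
  set W : Finset (Fin (m + 1)) → Finset (Fin (n + 1)) → Set (B₁ × B₂) := fun S T =>
    {p | (∀ i ∈ S, ∀ j ∈ T, 0 < h i p * g j p) ∧
      ∀ i ∈ S, ∀ j ∈ T, ∀ i' j', (i' ∉ S ∨ j' ∉ T) → h i' p * g j' p < h i p * g j p} with hW
  have hWopen : ∀ S T, IsOpen (W S T) := by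
    intro S T
    have he : W S T = ⋂ i ∈ S, ⋂ j ∈ T, ({p | 0 < h i p * g j p} ∩
        ⋂ i', ⋂ j', ⋂ (_ : i' ∉ S ∨ j' ∉ T), {p | h i' p * g j' p < h i p * g j p}) := by
      ext p
      simp only [hW, mem_setOf_eq, mem_iInter, mem_inter_iff]
      constructor
      · rintro ⟨ha, hb⟩ i hi j hj
        exact ⟨ha i hi j hj, fun i' j' hc => hb i hi j hj i' j' hc⟩
      · intro hh
        exact ⟨fun i hi j hj => (hh i hi j hj).1, fun i hi j hj i' j' hc => (hh i hi j hj).2 i' j' hc⟩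
    rw [he]
    refine isOpen_biInter_finset fun i _ => isOpen_biInter_finset fun j _ => IsOpen.inter ?_ ?_
    · exact isOpen_lt continuous_const ((h i).continuous.mul (g j).continuous)
    · exact isOpen_iInter_of_finite fun i' => isOpen_iInter_of_finite fun j' =>
        isOpen_iInter_prop _ (isOpen_lt ((h i').continuous.mul (g j').continuous)
          ((h i).continuous.mul (g j).continuous))
  have hWU : ∀ S T p, p ∈ W S T → ∀ i ∈ S, ∀ j ∈ T, p.1 ∈ U i ∧ p.2 ∈ V j := by
    intro S T p hp i hi j hj
    have hpos := hp.1 i hi j hj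
    have hi0 : h i p ≠ 0 := by intro e; rw [e, zero_mul] at hpos; exact lt_irrefl 0 hpos
    have hj0 : g j p ≠ 0 := by intro e; rw [e, mul_zero] at hpos; exact lt_irrefl 0 hpos
    exact ⟨hsupp i p hi0, gsupp j p hj0⟩
  have hWdisj : ∀ S T S' T' : _, S.Nonempty → T.Nonempty → S'.Nonempty → T'.Nonempty →
      S.card + T.card = S'.card + T'.card → ¬(S = S' ∧ T = T') →
      ∀ p, p ∈ W S T → p ∈ W S' T' → False := by
    intro S T S' T' hS hT hS' hT' hcard hne p hp hp'
    have notsub : ¬(S ⊆ S' ∧ T ⊆ T') := by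
      rintro ⟨hss, htt⟩
      have c1 : S.card ≤ S'.card := Finset.card_le_card hss
      have c2 : T.card ≤ T'.card := Finset.card_le_card htt
      exact hne ⟨Finset.eq_of_subset_of_card_le hss (by omega),
        Finset.eq_of_subset_of_card_le htt (by omega)⟩
    have notsub' : ¬(S' ⊆ S ∧ T' ⊆ T) := by
      rintro ⟨hss, htt⟩
      have c1 : S'.card ≤ S.card := Finset.card_le_card hss
      have c2 : T'.card ≤ T.card := Finset.card_le_card htt
      exact hne ⟨(Finset.eq_of_subset_of_card_le hss (by omega)).symm,
        (Finset.eq_of_subset_of_card_le htt (by omega)).symm⟩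
    obtain ⟨i, hiS, j, hjT, hc⟩ := pick_aux hS hT notsub
    obtain ⟨i', hiS', j', hjT', hc'⟩ := pick_aux hS' hT' notsub'
    have l1 := hp.2 i hiS j hjT i' j' hc'
    have l2 := hp'.2 i' hiS' j' hjT' i j hc
    linarith
  have hWcov : ∀ p : B₁ × B₂, ∃ S T, S.Nonempty ∧ T.Nonempty ∧
      2 ≤ S.card + T.card ∧ S.card + T.card ≤ m + n + 2 ∧ p ∈ W S T := by
    intro p
    obtain ⟨i₀, hi₀⟩ := Finite.exists_max (fun i => h i p)
    obtain ⟨j₀, hj₀⟩ := Finite.exists_max (fun j => g j p)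
    set S : Finset (Fin (m + 1)) := Finset.univ.filter (fun i => ∀ i', h i' p ≤ h i p) with hSdef
    set T : Finset (Fin (n + 1)) := Finset.univ.filter (fun j => ∀ j', g j' p ≤ g j p) with hTdef
    have hiS : ∀ i ∈ S, ∀ i', h i' p ≤ h i p := by
      intro i hi; simpa [hSdef, Finset.mem_filter] using hi
    have hjT : ∀ j ∈ T, ∀ j', g j' p ≤ g j p := by
      intro j hj; simpa [hTdef, Finset.mem_filter] using hj
    have hSne : S.Nonempty := by
      refine ⟨i₀, ?_⟩
      simp only [hSdef, Finset.mem_filter, Finset.mem_univ, true_and]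
      exact hi₀
    have hTne : T.Nonempty := by
      refine ⟨j₀, ?_⟩
      simp only [hTdef, Finset.mem_filter, Finset.mem_univ, true_and]
      exact hj₀
    have hnotS : ∀ i' ∉ S, ∀ i ∈ S, h i' p < h i p := by
      intro i' hi' i hi
      have hx : ¬ ∀ i'', h i'' p ≤ h i' p := by
        simpa [hSdef, Finset.mem_filter] using hi'
      push_neg at hx
      obtain ⟨i'', hii⟩ := hx
      exact lt_of_lt_of_le hii (hiS i hi i'')
    have hnotT : ∀ j' ∉ T, ∀ j ∈ T, g j' p < g j p := by
      intro j' hj' j hj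
      have hx : ¬ ∀ j'', g j'' p ≤ g j' p := by
        simpa [hTdef, Finset.mem_filter] using hj'
      push_neg at hx
      obtain ⟨j'', hjj⟩ := hx
      exact lt_of_lt_of_le hjj (hjT j hj j'')
    obtain ⟨ip, hip⟩ := hcov p
    obtain ⟨jp, hjp⟩ := gcov p
    have hSpos : ∀ i ∈ S, 0 < h i p := fun i hi => lt_of_lt_of_le hip (hiS i hi ip)
    have hTpos : ∀ j ∈ T, 0 < g j p := fun j hj => lt_of_lt_of_le hjp (hjT j hj jp)
    refine ⟨S, T, hSne, hTne, ?_, ?_, ?_, ?_⟩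
    · have := hSne.card_pos; have := hTne.card_pos; omega
    · have c1 : S.card ≤ m + 1 := by
        simpa using Finset.card_le_univ S
      have c2 : T.card ≤ n + 1 := by
        simpa using Finset.card_le_univ T
      omega
    · exact fun i hi j hj => mul_pos (hSpos i hi) (hTpos j hj)
    · intro i hi j hj i' j' hc
      rcases hc with hc | hc
      · calc h i' p * g j' p ≤ h i' p * g j p :=
              mul_le_mul_of_nonneg_left (hjT j hj j') (h0 i' p)
          _ < h i p * g j p := mul_lt_mul_of_pos_right (hnotS i' hc i hi) (hTpos j hj)
      · calc h i' p * g j' p ≤ h i p * g j' p :=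
              mul_le_mul_of_nonneg_right (hiS i hi i') (g0 j' p)
          _ < h i p * g j p := mul_lt_mul_of_pos_left (hnotT j' hc j hj) (hSpos i hi)
  classical
  refine ⟨fun k => ⋃ (S : Finset (Fin (m + 1))) (T : Finset (Fin (n + 1)))
      (_ : S.Nonempty) (_ : T.Nonempty) (_ : S.card + T.card = (k : ℕ) + 2), W S T, ?_, ?_, ?_⟩
  · intro k
    exact isOpen_iUnion fun S => isOpen_iUnion fun T => isOpen_iUnion fun _ =>
      isOpen_iUnion fun _ => isOpen_iUnion fun _ => hWopen S T
  · rw [iUnion_eq_univ_iff]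
    intro p
    obtain ⟨S, T, hSne, hTne, h2, hle, hpW⟩ := hWcov p
    refine ⟨⟨S.card + T.card - 2, by omega⟩, ?_⟩
    simp only [mem_iUnion]
    refine ⟨S, T, hSne, hTne, ?_, hpW⟩
    show S.card + T.card = S.card + T.card - 2 + 2
    omega
  · intro k
    have he : (⋃ (S : Finset (Fin (m + 1))) (T : Finset (Fin (n + 1)))
        (_ : S.Nonempty) (_ : T.Nonempty) (_ : S.card + T.card = (k : ℕ) + 2), W S T)
        = ⋃ q : {ST : Finset (Fin (m + 1)) × Finset (Fin (n + 1)) //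
            ST.1.Nonempty ∧ ST.2.Nonempty ∧ ST.1.card + ST.2.card = (k : ℕ) + 2},
            W q.1.1 q.1.2 := by
      ext p
      simp only [mem_iUnion]
      constructor
      · rintro ⟨S, T, hS, hT, hc, hp⟩
        exact ⟨⟨(S, T), hS, hT, hc⟩, hp⟩
      · rintro ⟨⟨⟨S, T⟩, hS, hT, hc⟩, hp⟩
        exact ⟨S, T, hS, hT, hc, hp⟩
    suffices hsuff : StronglyRelInessentialOn (Prod.map f₁ f₂)
        (⋃ q : {ST : Finset (Fin (m + 1)) × Finset (Fin (n + 1)) //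
            ST.1.Nonempty ∧ ST.2.Nonempty ∧ ST.1.card + ST.2.card = (k : ℕ) + 2},
            W q.1.1 q.1.2) (C₁ ×ˢ C₂) (A₁ ×ˢ A₂) by
      rw [← he] at hsuff
      exact hsuff
    refine StronglyRelInessentialOn.iUnion_of_disjoint (fun q => hWopen _ _) ?_ ?_
    · intro q q' hne p hp hp'
      refine hWdisj q.1.1 q.1.2 q'.1.1 q'.1.2 q.2.1 q.2.2.1 q'.2.1 q'.2.2.1
        (by rw [q.2.2.2, q'.2.2.2]) ?_ p hp hp'
      rintro ⟨e1, e2⟩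
      exact hne (Subtype.ext (Prod.ext e1 e2))
    · intro q
      refine StronglyRelInessentialOn.mono' (fun p hp => ?_)
        ((hU (q.1.1.min' q.2.1)).prod' (hV (q.1.2.min' q.2.2.1)))
      exact hWU q.1.1 q.1.2 p hp _ (Finset.min'_mem _ q.2.1) _ (Finset.min'_mem _ q.2.2.1)


lemma srelcat_prod_le_aux {B₁ B₂ X₁ X₂ : Type*} [TopologicalSpace B₁] [TopologicalSpace B₂]
    [TopologicalSpace X₁] [TopologicalSpace X₂] [NormalSpace (B₁ × B₂)]
    {C₁ : Set B₁} {C₂ : Set B₂} {A₁ : Set X₁} {A₂ : Set X₂}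
    (f₁ : B₁ → X₁) (f₂ : B₂ → X₂) :
    srelcat (Prod.map f₁ f₂) (C₁ ×ˢ C₂) (A₁ ×ˢ A₂) ≤ srelcat f₁ C₁ A₁ + srelcat f₂ C₂ A₂ := by
  by_cases h1 : {m : ℕ | srelcatLE f₁ C₁ A₁ m}.Nonempty
  · by_cases h2 : {m : ℕ | srelcatLE f₂ C₂ A₂ m}.Nonempty
    · set N₁ := sInf {m : ℕ | srelcatLE f₁ C₁ A₁ m} with hN₁
      set N₂ := sInf {m : ℕ | srelcatLE f₂ C₂ A₂ m} with hN₂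
      have hL1 : srelcatLE f₁ C₁ A₁ N₁ := Nat.sInf_mem h1
      have hL2 : srelcatLE f₂ C₂ A₂ N₂ := Nat.sInf_mem h2
      have key := srelcatLE_prod hL1 hL2
      have lhs : srelcat (Prod.map f₁ f₂) (C₁ ×ˢ C₂) (A₁ ×ˢ A₂) ≤ ((N₁ + N₂ : ℕ) : ℕ∞) :=
        sInf_le ⟨N₁ + N₂, rfl, key⟩
      have r1 : ((N₁ : ℕ) : ℕ∞) ≤ srelcat f₁ C₁ A₁ := by
        refine le_sInf ?_
        rintro b ⟨m, rfl, hm⟩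
        exact_mod_cast Nat.sInf_le hm
      have r2 : ((N₂ : ℕ) : ℕ∞) ≤ srelcat f₂ C₂ A₂ := by
        refine le_sInf ?_
        rintro b ⟨m, rfl, hm⟩
        exact_mod_cast Nat.sInf_le hm
      calc srelcat (Prod.map f₁ f₂) (C₁ ×ˢ C₂) (A₁ ×ˢ A₂) ≤ ((N₁ + N₂ : ℕ) : ℕ∞) := lhs
        _ = ((N₁ : ℕ) : ℕ∞) + ((N₂ : ℕ) : ℕ∞) := by push_cast; rfl
        _ ≤ _ := add_le_add r1 r2
    · have h : srelcat f₂ C₂ A₂ = ⊤ := by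
        rw [srelcat]
        convert (show sInf (∅ : Set ℕ∞) = ⊤ from sInf_empty)
        rw [Set.eq_empty_iff_forall_notMem]
        rintro x ⟨m, rfl, hm⟩
        exact h2 ⟨m, hm⟩
      rw [h, add_top]
      exact le_top
  · have h : srelcat f₁ C₁ A₁ = ⊤ := by
      rw [srelcat]
      convert (show sInf (∅ : Set ℕ∞) = ⊤ from sInf_empty)
      rw [Set.eq_empty_iff_forall_notMem]
      rintro x ⟨m, rfl, hm⟩
      exact h1 ⟨m, hm⟩
    rw [h, top_add]
    exact le_top


/-- product inequality for `srelcat`: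
`srelcat (f₁ × f₂) ≤ srelcat f₁ + srelcat f₂` for maps of pairs
`fᵢ : (Bᵢ,Cᵢ) → (Xᵢ,Aᵢ)` with `B₁ × B₂` normal; in particular
`srelcat (B₁ × B₂, C₁ × C₂) ≤ srelcat (B₁,C₁) + srelcat (B₂,C₂)`. -/
theorem srelcat_prod_le {B₁ B₂ X₁ X₂ : Type*} [TopologicalSpace B₁] [TopologicalSpace B₂]
    [TopologicalSpace X₁] [TopologicalSpace X₂] [NormalSpace (B₁ × B₂)]
    {C₁ : Set B₁} {C₂ : Set B₂} {A₁ : Set X₁} {A₂ : Set X₂}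
    (f₁ : B₁ → X₁) (f₂ : B₂ → X₂) (hf₁ : Continuous f₁) (hf₂ : Continuous f₂)
    (h₁ : Set.MapsTo f₁ C₁ A₁) (h₂ : Set.MapsTo f₂ C₂ A₂) :
    srelcat (Prod.map f₁ f₂) (C₁ ×ˢ C₂) (A₁ ×ˢ A₂)
      ≤ srelcat f₁ C₁ A₁ + srelcat f₂ C₂ A₂ ∧
    srelcat (id : B₁ × B₂ → B₁ × B₂) (C₁ ×ˢ C₂) (C₁ ×ˢ C₂)
      ≤ srelcat (id : B₁ → B₁) C₁ C₁ + srelcat (id : B₂ → B₂) C₂ C₂ := by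
  refine ⟨srelcat_prod_le_aux f₁ f₂, ?_⟩
  have h := srelcat_prod_le_aux (C₁ := C₁) (C₂ := C₂) (A₁ := C₁) (A₂ := C₂)
    (id : B₁ → B₁) (id : B₂ → B₂)
  rwa [Prod.map_id] at h
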